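/- For every n ≥ 2, the maximum cardinality of a trifferent code of length n with minimum Hamming distance equal to 1 is exactly T(n−1) + 1. In particular, every trifferent code of length n that contains two codewords at Hamming distance 1 has cardinality at most T(n−1) + 1. -/

import Mathlib

/-- A code `C ⊆ αⁿ` is trifferent if for any three pairwise distinct codewords
there exists a coordinate in which they pairwise differ. -/
def Trifferent {n : ℕ} {α : Type*} (C : Set (Fin n → α)) : Prop :=
  ∀ x ∈ C, ∀ y ∈ C, ∀ z ∈ C, x ≠ y → x ≠ z → y ≠ z →
    ∃ i : Fin n, x i ≠ y i ∧ x i ≠ z i ∧ y i ≠ z i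

/-- `T n` is the maximum cardinality of a trifferent code of length `n`
over the alphabet `{0,1,2}`. -/
noncomputable def T (n : ℕ) : ℕ :=
  sSup {m | ∃ C : Set (Fin n → Fin 3), Trifferent C ∧ C.ncard = m}

/-- The minimum Hamming distance of a code. -/
noncomputable def minDist {n : ℕ} (C : Set (Fin n → Fin 3)) : ℕ :=
  sInf {d | ∃ x ∈ C, ∃ y ∈ C, x ≠ y ∧ hammingDist x y = d}

private lemma fin3_third : ∀ a b c d : Fin 3, a ≠ b → c ≠ a → c ≠ b → d ≠ a → d ≠ b → c = d := by
  decide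

private lemma Tbdd (k : ℕ) :
    BddAbove {m | ∃ C : Set (Fin k → Fin 3), Trifferent C ∧ C.ncard = m} := by
  refine ⟨Nat.card (Fin k → Fin 3), ?_⟩
  rintro m ⟨C, -, rfl⟩
  exact le_trans (Set.ncard_le_ncard (Set.subset_univ C) Set.finite_univ)
    (le_of_eq (Set.ncard_univ _))

private lemma le_T {k : ℕ} {C : Set (Fin k → Fin 3)} (h : Trifferent C) : C.ncard ≤ T k :=
  le_csSup (Tbdd k) ⟨C, h, rfl⟩

private lemma T_mem (k : ℕ) : ∃ C : Set (Fin k → Fin 3), Trifferent C ∧ C.ncard = T k := by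
  have h := Nat.sSup_mem
    (s := {m | ∃ C : Set (Fin k → Fin 3), Trifferent C ∧ C.ncard = m})
    ⟨0, ∅, fun x hx => absurd hx (Set.notMem_empty x), Set.ncard_empty _⟩ (Tbdd k)
  obtain ⟨C, hC, hc⟩ := h
  exact ⟨C, hC, hc⟩

private lemma three_le_T {k : ℕ} (hk : 1 ≤ k) : 3 ≤ T k := by
  set C : Set (Fin k → Fin 3) := {fun _ => 0, fun _ => 1, fun _ => 2} with hCdef
  have hne : ∀ a b : Fin 3, a ≠ b → (fun _ : Fin k => a) ≠ (fun _ => b) := by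
    intro a b hab h
    exact hab (congrFun h ⟨0, hk⟩)
  have htr : Trifferent C := by
    intro x hx y hy z hz hxy hxz hyz
    simp only [hCdef, Set.mem_insert_iff, Set.mem_singleton_iff] at hx hy hz
    obtain ⟨a, rfl⟩ : ∃ a, x = fun _ => a := by rcases hx with rfl|rfl|rfl <;> exact ⟨_, rfl⟩
    obtain ⟨b, rfl⟩ : ∃ b, y = fun _ => b := by rcases hy with rfl|rfl|rfl <;> exact ⟨_, rfl⟩
    obtain ⟨c, rfl⟩ : ∃ c, z = fun _ => c := by rcases hz with rfl|rfl|rfl <;> exact ⟨_, rfl⟩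
    exact ⟨⟨0, hk⟩, fun h => hxy (funext fun _ => h), fun h => hxz (funext fun _ => h),
      fun h => hyz (funext fun _ => h)⟩
  have hcard : C.ncard = 3 :=
    Set.ncard_eq_three.mpr ⟨_, _, _, hne 0 1 (by decide), hne 0 2 (by decide),
      hne 1 2 (by decide), rfl⟩
  calc 3 = C.ncard := hcard.symm
    _ ≤ T k := le_T htr

private lemma upper {m : ℕ} (hm : 1 ≤ m) (C : Set (Fin (m + 1) → Fin 3)) (hC : Trifferent C)
    (x y : Fin (m + 1) → Fin 3) (hx : x ∈ C) (hy : y ∈ C) (hd : hammingDist x y = 1) :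
    C.ncard ≤ T m + 1 := by
  have hd' : (Finset.univ.filter fun j => x j ≠ y j).card = 1 := hd
  obtain ⟨i, hi⟩ := Finset.card_eq_one.mp hd'
  have hxyi : x i ≠ y i := by
    have : i ∈ Finset.univ.filter fun j => x j ≠ y j := hi ▸ Finset.mem_singleton_self i
    simpa using this
  have hoff : ∀ j, j ≠ i → x j = y j := by
    intro j hj
    by_contra h
    have : j ∈ Finset.univ.filter fun j => x j ≠ y j := by simpa using h
    rw [hi, Finset.mem_singleton] at this
    exact hj this
  have hxy : x ≠ y := fun h => hxyi (by rw [h])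
  have fact2 : ∀ z ∈ C, z ≠ x → z ≠ y → z i ≠ x i ∧ z i ≠ y i := by
    intro z hz hzx hzy
    obtain ⟨j, h1, h2, h3⟩ := hC x hx y hy z hz hxy (Ne.symm hzx) (Ne.symm hzy)
    have hji : j = i := by
      by_contra hji
      exact h1 (hoff j hji)
    rw [hji] at h2 h3
    exact ⟨Ne.symm h2, Ne.symm h3⟩
  have eqt : ∀ z ∈ C, ∀ w ∈ C, z ≠ x → z ≠ y → w ≠ x → w ≠ y → z i = w i := by
    intro z hz w hw h1 h2 h3 h4
    obtain ⟨a1, a2⟩ := fact2 z hz h1 h2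
    obtain ⟨b1, b2⟩ := fact2 w hw h3 h4
    exact fin3_third (x i) (y i) (z i) (w i) hxyi a1 a2 b1 b2
  have hCfin : C.Finite := Set.toFinite C
  by_cases hA : ∃ z ∈ C, z ≠ x ∧ z ≠ y ∧ ∀ k : Fin m, z (i.succAbove k) = y (i.succAbove k)
  · obtain ⟨z, hz, hzx, hzy, hzoff⟩ := hA
    have hCeq : C = {x, y, z} := by
      apply Set.Subset.antisymm
      · intro w hw
        by_contra hw3
        simp only [Set.mem_insert_iff, Set.mem_singleton_iff] at hw3
        push_neg at hw3
        obtain ⟨hwx, hwy, hwz⟩ := hw3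
        obtain ⟨j, h1, h2, h3⟩ := hC y hy z hz w hw (Ne.symm hzy) (Ne.symm hwy) (Ne.symm hwz)
        have hji : j = i := by
          by_contra hji
          obtain ⟨k, rfl⟩ := Fin.exists_succAbove_eq hji
          exact h1 (hzoff k).symm
        rw [hji] at h3
        exact h3 (eqt z hz w hw hzx hzy hwx hwy)
      · intro w hw
        simp only [Set.mem_insert_iff, Set.mem_singleton_iff] at hw
        rcases hw with rfl|rfl|rfl <;> assumption
    have h3c : C.ncard = 3 := by
      rw [hCeq]
      exact Set.ncard_eq_three.mpr ⟨x, y, z, hxy, Ne.symm hzx, Ne.symm hzy, rfl⟩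
    have := three_le_T hm
    omega
  · have hinj : Set.InjOn (fun z (k : Fin m) => z (i.succAbove k)) (C \ {x}) := by
      rintro z ⟨hz, hzx⟩ w ⟨hw, hwx⟩ hzw
      simp only [Set.mem_singleton_iff] at hzx hwx
      by_contra hne
      have hoffzw : ∀ k, z (i.succAbove k) = w (i.succAbove k) := fun k => congrFun hzw k
      rcases eq_or_ne z y with h|hzy
      · exact hA ⟨w, hw, hwx, fun hh => hne (h.trans hh.symm),
          fun k => by rw [← h]; exact (hoffzw k).symm⟩
      rcases eq_or_ne w y with h|hwy
      · exact hA ⟨z, hz, hzx, hzy, fun k => by rw [← h]; exact hoffzw k⟩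
      · apply hne
        funext j
        rcases eq_or_ne j i with rfl|hji
        · exact eqt z hz w hw hzx hzy hwx hwy
        · obtain ⟨k, rfl⟩ := Fin.exists_succAbove_eq hji
          exact hoffzw k
    have htrif : Trifferent ((fun z (k : Fin m) => z (i.succAbove k)) '' (C \ {x})) := by
      rintro a ⟨z, hz, rfl⟩ b ⟨w, hw, rfl⟩ c ⟨v, hv, rfl⟩ hab hac hbc
      have hzw : z ≠ w := fun h => hab (by rw [h])
      have hzv : z ≠ v := fun h => hac (by rw [h])
      have hwv : w ≠ v := fun h => hbc (by rw [h])
      obtain ⟨hzC, hzx⟩ := hz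
      obtain ⟨hwC, hwx⟩ := hw
      obtain ⟨hvC, hvx⟩ := hv
      simp only [Set.mem_singleton_iff] at hzx hwx hvx
      obtain ⟨j, h1, h2, h3⟩ := hC z hzC w hwC v hvC hzw hzv hwv
      have hji : j ≠ i := by
        rintro rfl
        rcases eq_or_ne z y with h|h
        · exact h3 (eqt w hwC v hvC hwx (fun hh => hzw (h.trans hh.symm)) hvx
            (fun hh => hzv (h.trans hh.symm)))
        · rcases eq_or_ne w y with h'|h'
          · exact h2 (eqt z hzC v hvC hzx h hvx (fun hh => hwv (h'.trans hh.symm)))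
          · exact h1 (eqt z hzC w hwC hzx h hwx h')
      obtain ⟨k, rfl⟩ := Fin.exists_succAbove_eq hji
      exact ⟨k, h1, h2, h3⟩
    have hcard : ((fun z (k : Fin m) => z (i.succAbove k)) '' (C \ {x})).ncard
        = (C \ {x}).ncard := Set.ncard_image_of_injOn hinj
    have h1 : (C \ {x}).ncard ≤ T m := by rw [← hcard]; exact le_T htrif
    have h2 : (C \ {x}).ncard + 1 = C.ncard := Set.ncard_diff_singleton_add_one hx hCfin
    rw [← h2]
    exact Nat.add_le_add_right h1 1

private lemma lower {m : ℕ} (hm : 1 ≤ m) :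
    ∃ C : Set (Fin (m + 1) → Fin 3), Trifferent C ∧ minDist C = 1 ∧ C.ncard = T m + 1 := by
  obtain ⟨S, hS, hScard⟩ := T_mem m
  have h3 : 3 ≤ T m := three_le_T hm
  have hSne : S.Nonempty := Set.nonempty_of_ncard_ne_zero (by omega)
  obtain ⟨c0, hc0⟩ := hSne
  obtain ⟨F, hF⟩ : ∃ F : (Fin m → Fin 3) → (Fin (m + 1) → Fin 3),
      F = fun c => (Fin.snoc c 0 : Fin (m + 1) → Fin 3) :=
    ⟨fun c => (Fin.snoc c 0 : Fin (m + 1) → Fin 3), rfl⟩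
  obtain ⟨s1, hs1⟩ : ∃ s1 : Fin (m + 1) → Fin 3, s1 = Fin.snoc c0 1 := ⟨_, rfl⟩
  obtain ⟨s2, hs2⟩ : ∃ s2 : Fin (m + 1) → Fin 3, s2 = Fin.snoc c0 2 := ⟨_, rfl⟩
  have hs12 : s1 ≠ s2 := by
    intro h
    have := congrFun h (Fin.last m)
    rw [hs1, hs2] at this
    simp only [Fin.snoc_last] at this
    exact absurd this (by decide)
  refine ⟨F '' (S \ {c0}) ∪ {s1, s2}, ?_, ?_, ?_⟩
  · -- Trifferent
    have hmem : ∀ u ∈ F '' (S \ {c0}) ∪ {s1, s2},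
        ∃ c a, u = Fin.snoc c a ∧ c ∈ S ∧ ((a = 0 ∧ c ≠ c0) ∨ (c = c0 ∧ a ≠ 0)) := by
      intro u hu
      rcases hu with ⟨c, ⟨hcS, hcc0⟩, rfl⟩ | hu
      · exact ⟨c, 0, by rw [hF], hcS, Or.inl ⟨rfl, fun h => hcc0 h⟩⟩
      · simp only [Set.mem_insert_iff, Set.mem_singleton_iff] at hu
        rcases hu with rfl | rfl
        · exact ⟨c0, 1, hs1, hc0, Or.inr ⟨rfl, by decide⟩⟩
        · exact ⟨c0, 2, hs2, hc0, Or.inr ⟨rfl, by decide⟩⟩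
    have keyK : ∀ (c d : Fin m → Fin 3) (a b : Fin 3),
        ((a = 0 ∧ c ≠ c0) ∨ (c = c0 ∧ a ≠ 0)) → ((b = 0 ∧ d ≠ c0) ∨ (d = c0 ∧ b ≠ 0)) →
        (Fin.snoc c a : Fin (m + 1) → Fin 3) ≠ Fin.snoc d b → (a = 0 ∨ b = 0) → c ≠ d := by
      intro c d a b hq1 hq2 hne h0
      rintro rfl
      have hab : a = b := by
        rcases hq1 with ⟨ha0, hcc0⟩ | ⟨hcc0, ha⟩
        · rcases hq2 with ⟨hb0, _⟩ | ⟨hdc0, _⟩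
          · rw [ha0, hb0]
          · exact absurd hdc0 hcc0
        · rcases hq2 with ⟨_, hdc0⟩ | ⟨_, hb⟩
          · exact absurd hcc0 hdc0
          · rcases h0 with h0 | h0
            · exact absurd h0 ha
            · exact absurd h0 hb
      exact hne (by rw [hab])
    have keyEq : ∀ (c d : Fin m → Fin 3) (a b : Fin 3),
        ((a = 0 ∧ c ≠ c0) ∨ (c = c0 ∧ a ≠ 0)) → ((b = 0 ∧ d ≠ c0) ∨ (d = c0 ∧ b ≠ 0)) →
        (Fin.snoc c a : Fin (m + 1) → Fin 3) ≠ Fin.snoc d b → a = b → a = 0 := by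
      intro c d a b hq1 hq2 hne hab
      rcases hq1 with ⟨ha0, _⟩ | ⟨hcc0, ha⟩
      · exact ha0
      · rcases hq2 with ⟨hb0, _⟩ | ⟨hdc0, _⟩
        · exact absurd (hab.trans hb0) ha
        · exact absurd (by rw [hab, hcc0, hdc0]) hne
    intro u hu v hv w hw huv huw hvw
    obtain ⟨c, a, rfl, hcS, hq1⟩ := hmem u hu
    obtain ⟨d, b, rfl, hdS, hq2⟩ := hmem v hv
    obtain ⟨e, g, rfl, heS, hq3⟩ := hmem w hw
    by_cases hsec : a ≠ b ∧ a ≠ g ∧ b ≠ g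
    · exact ⟨Fin.last m, by simpa only [Fin.snoc_last] using hsec⟩
    · push_neg at hsec
      have hdist : c ≠ d ∧ c ≠ e ∧ d ≠ e := by
        rcases eq_or_ne a b with hab | hab
        · have h0 : a = 0 := keyEq c d a b hq1 hq2 huv hab
          have hb0 : b = 0 := hab ▸ h0
          exact ⟨keyK c d a b hq1 hq2 huv (Or.inl h0),
                 keyK c e a g hq1 hq3 huw (Or.inl h0),
                 keyK d e b g hq2 hq3 hvw (Or.inl hb0)⟩
        · rcases eq_or_ne a g with hag | hag
          · have h0 : a = 0 := keyEq c e a g hq1 hq3 huw hag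
            have hg0 : g = 0 := hag ▸ h0
            exact ⟨keyK c d a b hq1 hq2 huv (Or.inl h0),
                   keyK c e a g hq1 hq3 huw (Or.inl h0),
                   keyK d e b g hq2 hq3 hvw (Or.inr hg0)⟩
          · have hbg : b = g := hsec hab hag
            have h0 : b = 0 := keyEq d e b g hq2 hq3 hvw hbg
            have hg0 : g = 0 := hbg ▸ h0
            exact ⟨keyK c d a b hq1 hq2 huv (Or.inr h0),
                   keyK c e a g hq1 hq3 huw (Or.inr hg0),
                   keyK d e b g hq2 hq3 hvw (Or.inl h0)⟩
      obtain ⟨j, hj1, hj2, hj3⟩ := hS c hcS d hdS e heS hdist.1 hdist.2.1 hdist.2.2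
      exact ⟨j.castSucc, by simpa only [Fin.snoc_castSucc] using hj1,
        by simpa only [Fin.snoc_castSucc] using hj2,
        by simpa only [Fin.snoc_castSucc] using hj3⟩
  · -- minDist = 1
    have hdist12 : hammingDist s1 s2 = 1 := by
      show (Finset.univ.filter fun j => s1 j ≠ s2 j).card = 1
      have heq : (Finset.univ.filter fun j => s1 j ≠ s2 j) = {Fin.last m} := by
        ext j
        simp only [Finset.mem_filter, Finset.mem_univ, true_and, Finset.mem_singleton]
        constructor
        · intro hj
          by_contra hjl
          obtain ⟨k, rfl⟩ := Fin.exists_succAbove_eq hjl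
          rw [Fin.succAbove_last, hs1, hs2] at hj
          simp only [Fin.snoc_castSucc] at hj
          exact hj rfl
        · rintro rfl
          rw [hs1, hs2]
          simp only [Fin.snoc_last]
          decide
      rw [heq, Finset.card_singleton]
    have hmem1 : s1 ∈ F '' (S \ {c0}) ∪ {s1, s2} := Set.mem_union_right _ (by simp)
    have hmem2 : s2 ∈ F '' (S \ {c0}) ∪ {s1, s2} := Set.mem_union_right _ (by simp)
    unfold minDist
    refine le_antisymm (Nat.sInf_le ⟨_, hmem1, _, hmem2, hs12, hdist12⟩) ?_
    refine le_csInf ⟨1, _, hmem1, _, hmem2, hs12, hdist12⟩ ?_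
    rintro d ⟨p, -, q, -, hpq, rfl⟩
    exact Nat.one_le_iff_ne_zero.mpr (fun h => hpq (eq_of_hammingDist_eq_zero h))
  · -- cardinality
    have hinj : Set.InjOn F (S \ {c0}) := by
      intro p _ q _ h
      rw [hF] at h
      funext k
      have := congrFun h k.castSucc
      simpa only [Fin.snoc_castSucc] using this
    have hdisj : Disjoint (F '' (S \ {c0})) ({s1, s2} : Set (Fin (m + 1) → Fin 3)) := by
      rw [Set.disjoint_left]
      rintro u ⟨c, _, rfl⟩ hu2
      simp only [Set.mem_insert_iff, Set.mem_singleton_iff] at hu2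
      rcases hu2 with h | h
      · have := congrFun h (Fin.last m)
        rw [hF, hs1] at this
        simp only [Fin.snoc_last] at this
        exact absurd this (by decide)
      · have := congrFun h (Fin.last m)
        rw [hF, hs2] at this
        simp only [Fin.snoc_last] at this
        exact absurd this (by decide)
    rw [Set.ncard_union_eq hdisj (Set.toFinite _) (Set.toFinite _),
      Set.ncard_image_of_injOn hinj,
      Set.ncard_diff_singleton_of_mem hc0, hScard, Set.ncard_pair hs12]
    omega

theorem T_minDist_one {n : ℕ} (hn : 2 ≤ n) :
    IsGreatest {m | ∃ C : Set (Fin n → Fin 3),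
        Trifferent C ∧ minDist C = 1 ∧ C.ncard = m} (T (n - 1) + 1) ∧
    ∀ C : Set (Fin n → Fin 3), Trifferent C →
      (∃ x ∈ C, ∃ y ∈ C, hammingDist x y = 1) → C.ncard ≤ T (n - 1) + 1 := by
  obtain ⟨m, rfl⟩ : ∃ m, n = m + 1 := ⟨n - 1, by omega⟩
  have hm : 1 ≤ m := by omega
  simp only [Nat.add_sub_cancel]
  have hupper : ∀ C : Set (Fin (m + 1) → Fin 3), Trifferent C →
      (∃ x ∈ C, ∃ y ∈ C, hammingDist x y = 1) → C.ncard ≤ T m + 1 := by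
    rintro C hC ⟨x, hx, y, hy, hd⟩
    exact upper hm C hC x y hx hy hd
  refine ⟨⟨lower hm, ?_⟩, hupper⟩
  rintro k ⟨C, hC, hmin, rfl⟩
  have hne : {d | ∃ x ∈ C, ∃ y ∈ C, x ≠ y ∧ hammingDist x y = d}.Nonempty := by
    by_contra h
    rw [Set.not_nonempty_iff_eq_empty] at h
    unfold minDist at hmin
    rw [h] at hmin
    simp [Nat.sInf_empty] at hmin
  have h1mem := Nat.sInf_mem hne
  have : sInf {d | ∃ x ∈ C, ∃ y ∈ C, x ≠ y ∧ hammingDist x y = d} = 1 := hmin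
  rw [this] at h1mem
  obtain ⟨x, hx, y, hy, -, hd⟩ := h1mem
  exact hupper C hC ⟨x, hx, y, hy, hd⟩
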